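/- Let F be a submodular set function on finite V with F(∅)=0 and G a decomposable (triangulated) graph with maximal cliques C(G) and junction-tree separators T(G). Define F_G^{JT}(A) = Σ_{C ∈ C(G)} F(C ∩ A) − Σ_{(C,D) ∈ T(G)} F(C ∩ D ∩ A). If F_G^{elim} is the bound defined via a perfect elimination ordering, F_G^{elim}(A) = Σ_{i} [F(A ∩ (π_i ∪ {i})) − F(A ∩ π_i)] where π_i are the later neighbors in the elimination ordering, then F_G^{JT}(A) = F_G^{elim}(A) for all A ⊆ V. -/

import Mathlib

open Finset

lemma reach_induce {α : Type*} {T : SimpleGraph α} {s : Set α} :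
    ∀ {a b : α} (p : T.Walk a b) (ha : a ∈ s) (hb : b ∈ s),
      (∀ k ∈ p.support, k ∈ s) → (T.induce s).Reachable ⟨a, ha⟩ ⟨b, hb⟩ := by
  intro a b p
  induction p with
  | nil => exact fun _ _ _ => SimpleGraph.Reachable.refl _
  | @cons u v w h q ih =>
    intro ha hb hp
    have hv : v ∈ s := hp v (by simp)
    have hq : ∀ k ∈ q.support, k ∈ s := fun k hk => hp k (by simp [hk])
    have hadj : (T.induce s).Adj ⟨u, ha⟩ ⟨v, hv⟩ := h
    exact hadj.reachable.trans (ih hv hb hq)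

lemma upcount {α β : Type*} [Fintype β] [DecidableEq β] (s : Finset α)
    (X : α → Finset β) (S : Finset β) :
    (s.filter fun x => S ⊆ X x).card
      = ∑ S' ∈ univ.filter (S ⊆ ·), (s.filter fun x => X x = S').card := by
  classical
  rw [Finset.card_eq_sum_card_fiberwise (f := X) (t := univ.filter (S ⊆ ·))
    (fun x hx => by simp only [coe_filter, Set.mem_setOf_eq, mem_coe, mem_filter, mem_univ, true_and] at hx ⊢; exact hx.2)]
  refine Finset.sum_congr rfl fun S' hS' => ?_
  simp only [mem_filter, mem_univ, true_and] at hS'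
  congr 1
  ext x
  simp only [mem_filter]
  constructor
  · rintro ⟨⟨hs, _⟩, h⟩; exact ⟨hs, h⟩
  · rintro ⟨hs, h⟩; exact ⟨⟨hs, h ▸ hS'⟩, h⟩

lemma sumfib {α γ : Type*} [Fintype γ] [DecidableEq γ] (s : Finset α) (X : α → γ)
    (f : γ → ℝ) :
    ∑ x ∈ s, f (X x) = ∑ y : γ, ((s.filter fun x => X x = y).card : ℝ) * f y := by
  rw [← Finset.sum_fiberwise s X (fun x => f (X x))]
  refine Finset.sum_congr rfl fun y _ => ?_
  rw [Finset.sum_congr rfl (fun x hx => by rw [(Finset.mem_filter.1 hx).2] :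
    ∀ x ∈ s.filter fun x => X x = y, f (X x) = f y), Finset.sum_const, nsmul_eq_mul]

lemma exactzero {β : Type*} [Fintype β] [DecidableEq β] (d : Finset β → ℤ)
    (h : ∀ S : Finset β, S.Nonempty → ∑ S' ∈ univ.filter (S ⊆ ·), d S' = 0) :
    ∀ S : Finset β, S.Nonempty → d S = 0 := by
  suffices H : ∀ k (S : Finset β), Sᶜ.card ≤ k → S.Nonempty → d S = 0 by
    exact fun S hS => H _ S le_rfl hS
  intro k
  induction k with
  | zero =>
    intro S hc hS
    have hU : S = univ := by
      have : Sᶜ = ∅ := Finset.card_eq_zero.1 (Nat.le_zero.1 hc)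
      rwa [Finset.compl_eq_empty_iff] at this
    have hfil : univ.filter (S ⊆ ·) = {univ} := by
      ext S'
      simp only [mem_filter, mem_univ, true_and, mem_singleton, hU]
      exact ⟨fun h' => (Finset.univ_subset_iff.1 h').symm ▸ rfl, fun h' => h' ▸ le_rfl⟩
    have := h S hS
    rw [hfil, Finset.sum_singleton] at this
    exact hU ▸ this
  | succ k ih =>
    intro S hc hS
    have hsplit : univ.filter (S ⊆ ·) = insert S (univ.filter (S ⊂ ·)) := by
      ext S'
      simp only [mem_filter, mem_univ, true_and, mem_insert]
      constructor
      · intro h'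
        rcases eq_or_ne S' S with rfl | hne
        · exact Or.inl rfl
        · exact Or.inr (Finset.ssubset_iff_subset_ne.2 ⟨h', Ne.symm hne⟩)
      · rintro (rfl | h')
        · exact Finset.Subset.refl _
        · exact h'.1
    have hnotmem : S ∉ univ.filter (S ⊂ ·) := by
      simp only [mem_filter]; exact fun h => ssubset_irrefl S h.2
    have hsum := h S hS
    rw [hsplit, Finset.sum_insert hnotmem] at hsum
    have hz : ∀ S' ∈ univ.filter (S ⊂ ·), d S' = 0 := by
      intro S' hS'
      simp only [mem_filter, mem_univ, true_and] at hS'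
      apply ih
      · have h1 : S.card < S'.card := Finset.card_lt_card hS'
        have h2 : S'.card ≤ Fintype.card β := Finset.card_le_univ S'
        have e1 : Sᶜ.card = Fintype.card β - S.card := Finset.card_compl S
        have e2 : S'ᶜ.card = Fintype.card β - S'.card := Finset.card_compl S'
        omega
      · exact hS.mono hS'.subset
    rw [Finset.sum_eq_zero hz, add_zero] at hsum
    exact hsum

lemma core_count {n : ℕ} {ι : Type*} [Fintype ι] [DecidableEq ι]
    (G : SimpleGraph (Fin n)) [DecidableRel G.Adj]
    (π : Fin n → Finset (Fin n))
    (hπ : ∀ i, π i = univ.filter (fun j => G.Adj i j ∧ i < j))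
    (hpeo : ∀ i, G.IsClique (π i : Set (Fin n)))
    (c : ι → Finset (Fin n)) (hcinj : Function.Injective c)
    (hclique : ∀ i, G.IsClique (c i : Set (Fin n)))
    (hmax : ∀ i, ∀ D : Finset (Fin n), G.IsClique (D : Set (Fin n)) → c i ⊆ D → D = c i)
    (hall : ∀ D : Finset (Fin n), G.IsClique (D : Set (Fin n)) →
      (∀ D' : Finset (Fin n), G.IsClique (D' : Set (Fin n)) → D ⊆ D' → D' = D) →
      ∃ i, c i = D)
    (𝒯 : Finset (ι × ι))
    (hirrefl : ∀ e ∈ 𝒯, e.1 ≠ e.2)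
    (honce : ∀ e ∈ 𝒯, (e.2, e.1) ∉ 𝒯)
    (T : SimpleGraph ι)
    (hT : T = SimpleGraph.fromRel (fun i j => (i, j) ∈ 𝒯))
    (htree : T.IsTree)
    (hRIP : ∀ i j k : ι, (∀ p : T.Walk i j, k ∈ p.support) → c i ∩ c j ⊆ c k)
    (S : Finset (Fin n)) (hS : S.Nonempty) :
    (univ.filter fun i : ι => S ⊆ c i).card + (univ.filter fun j : Fin n => S ⊆ π j).card
      = (𝒯.filter fun e => S ⊆ c e.1 ∩ c e.2).card
        + (univ.filter fun j : Fin n => S ⊆ insert j (π j)).card := by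
  classical
  have hπmem : ∀ j v : Fin n, v ∈ π j ↔ (G.Adj j v ∧ j < v) := by
    intro j v; rw [hπ]; simp
  by_cases hcl : G.IsClique (S : Set (Fin n))
  · -- clique case
    -- Part B : u4 = u2 + 1
    have hKclique : ∀ j : Fin n, G.IsClique ((insert j (π j) : Finset (Fin n)) : Set (Fin n)) := by
      intro j
      rw [Finset.coe_insert]
      exact (hpeo j).insert (fun b hb _ => ((hπmem j b).1 hb).1)
    have hBset : univ.filter (fun j : Fin n => S ⊆ insert j (π j))
        = insert (S.min' hS) (univ.filter fun j : Fin n => S ⊆ π j) := by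
      ext j
      simp only [mem_filter, mem_univ, true_and, mem_insert]
      constructor
      · intro h
        by_cases hj : j ∈ S
        · left
          refine le_antisymm (Finset.le_min' _ _ _ ?_) (Finset.min'_le S j hj)
          intro y hy
          rcases Finset.mem_insert.1 (h hy) with rfl | hy'
          · exact le_rfl
          · exact le_of_lt ((hπmem j y).1 hy').2
        · right
          intro v hv
          rcases Finset.mem_insert.1 (h hv) with rfl | hv'
          · exact absurd hv hj
          · exact hv'
      · rintro (rfl | hsub')
        · intro v hv
          rcases eq_or_ne v (S.min' hS) with rfl | hne
          · exact Finset.mem_insert_self _ _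
          · refine Finset.mem_insert_of_mem ((hπmem _ v).2 ⟨?_, ?_⟩)
            · exact hcl (Finset.mem_coe.2 (S.min'_mem hS)) (Finset.mem_coe.2 hv) hne.symm
            · exact lt_of_le_of_ne (Finset.min'_le S v hv) hne.symm
        · exact hsub'.trans (Finset.subset_insert _ _)
    have hmin_not : S.min' hS ∉ univ.filter (fun j : Fin n => S ⊆ π j) := by
      simp only [mem_filter, mem_univ, true_and]
      intro h
      exact absurd ((hπmem _ _).1 (h (S.min'_mem hS))).2 (lt_irrefl _)
    have hB : (univ.filter fun j : Fin n => S ⊆ insert j (π j)).card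
        = (univ.filter fun j : Fin n => S ⊆ π j).card + 1 := by
      rw [hBset, Finset.card_insert_of_notMem hmin_not]
    -- Part A : u1 = u3 + 1
    set Wfin : Finset ι := univ.filter (fun i => S ⊆ c i) with hWfin
    have hWne : Wfin.Nonempty := by
      obtain ⟨D, hD, hDmax⟩ := Finset.exists_max_image
        (univ.filter fun D : Finset (Fin n) => G.IsClique (D : Set (Fin n)) ∧ S ⊆ D)
        Finset.card ⟨S, by simp [hcl]⟩
      simp only [mem_filter, mem_univ, true_and] at hD
      obtain ⟨i0, hi0⟩ := hall D hD.1 (fun D' hD' hsub' =>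
        (Finset.eq_of_subset_of_card_le hsub' (hDmax D' (by
          simp only [mem_filter, mem_univ, true_and]
          exact ⟨hD', hD.2.trans hsub'⟩))).symm)
      exact ⟨i0, by simp only [hWfin, mem_filter, mem_univ, true_and]; exact hi0.symm ▸ hD.2⟩
    set Wset : Set ι := ↑Wfin with hWset
    have hWmem : ∀ x : ↥Wset, S ⊆ c x.1 := by
      intro x
      have := x.2
      simp only [hWset, hWfin, Finset.coe_filter, Set.mem_setOf_eq] at this
      exact this.2
    set T' : SimpleGraph ↥Wset := T.induce Wset with hT'
    have hconn : T'.Connected := by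
      rw [SimpleGraph.connected_iff]
      refine ⟨fun a b => ?_, ⟨⟨hWne.choose, by simp [hWset]; exact hWne.choose_spec⟩⟩⟩
      obtain ⟨w⟩ := htree.isConnected.preconnected a.1 b.1
      have hsup : ∀ k ∈ (w.toPath : T.Walk a.1 b.1).support, S ⊆ c k := by
        intro k hk
        have hall' : ∀ q : T.Walk a.1 b.1, k ∈ q.support := by
          intro q
          have hq : q.toPath = w.toPath := htree.2.path_unique _ _
          have : k ∈ (q.toPath : T.Walk a.1 b.1).support := by rw [hq]; exact hk
          exact SimpleGraph.Walk.support_toPath_subset q this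
        exact (Finset.subset_inter (hWmem a) (hWmem b)).trans (hRIP a.1 b.1 k hall')
      have hsup' : ∀ k ∈ (w.toPath : T.Walk a.1 b.1).support, k ∈ Wset := by
        intro k hk
        simp only [hWset, hWfin, Finset.coe_filter, Set.mem_setOf_eq]
        exact ⟨Finset.mem_univ _, hsup k hk⟩
      have := reach_induce (w.toPath : T.Walk a.1 b.1) a.2 b.2 hsup'
      exact this
    have hacyc : T'.IsAcyclic := by
      intro v p hp
      exact htree.2 (p.map (SimpleGraph.Embedding.induce (G := T) Wset).toHom)
        (hp.map (SimpleGraph.Embedding.induce (G := T) Wset).injective)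
    have htree' : T'.IsTree := ⟨hconn, hacyc⟩
    have hcardT := htree'.card_edgeFinset
    have hcardW : Fintype.card ↥Wset = Wfin.card := by
      simp [hWset]
    have hbij : (𝒯.filter fun e => S ⊆ c e.1 ∩ c e.2).card = T'.edgeFinset.card := by
      have hmemW : ∀ e ∈ 𝒯.filter (fun e => S ⊆ c e.1 ∩ c e.2),
          e.1 ∈ Wset ∧ e.2 ∈ Wset := by
        intro e he
        simp only [mem_filter, Finset.subset_inter_iff] at he
        constructor <;>
          · simp only [hWset, hWfin, Finset.coe_filter, Set.mem_setOf_eq]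
            exact ⟨Finset.mem_univ _, by tauto⟩
      refine Finset.card_bij
        (fun e he => s(⟨e.1, (hmemW e he).1⟩, ⟨e.2, (hmemW e he).2⟩)) ?_ ?_ ?_
      · intro e he
        have he' : e ∈ 𝒯 := (Finset.mem_filter.1 he).1
        rw [SimpleGraph.mem_edgeFinset, SimpleGraph.mem_edgeSet]
        show T.Adj e.1 e.2
        rw [hT]
        exact ⟨hirrefl e he', Or.inl he'⟩
      · intro a ha b hb hab
        rw [Sym2.eq_iff] at hab
        rcases hab with ⟨h1, h2⟩ | ⟨h1, h2⟩
        · exact Prod.ext (congrArg Subtype.val h1) (congrArg Subtype.val h2)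
        · exfalso
          have ha' : a ∈ 𝒯 := (Finset.mem_filter.1 ha).1
          have hb' : b ∈ 𝒯 := (Finset.mem_filter.1 hb).1
          have : b = (a.2, a.1) := Prod.ext (congrArg Subtype.val h2).symm (congrArg Subtype.val h1).symm
          exact honce a ha' (this ▸ hb')
      · intro z hz
        induction z using Sym2.ind with
        | _ a b =>
          rw [SimpleGraph.mem_edgeFinset, SimpleGraph.mem_edgeSet] at hz
          have hadj : T'.Adj a b := hz
          have hadj' : T.Adj a.1 b.1 := hadj
          rw [hT, SimpleGraph.fromRel_adj] at hadj'
          rcases hadj'.2 with h | h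
          · refine ⟨(a.1, b.1), Finset.mem_filter.2 ⟨h, Finset.subset_inter (hWmem a) (hWmem b)⟩, ?_⟩
            rfl
          · refine ⟨(b.1, a.1), Finset.mem_filter.2 ⟨h, Finset.subset_inter (hWmem b) (hWmem a)⟩, ?_⟩
            exact Sym2.eq_swap
    have hu1 : (univ.filter fun i : ι => S ⊆ c i).card = Wfin.card := rfl
    rw [hu1, hB, hbij]
    omega
  · -- non-clique case : everything empty
    have e1 : univ.filter (fun i : ι => S ⊆ c i) = ∅ := by
      rw [Finset.filter_eq_empty_iff]
      intro i _ h
      exact hcl ((hclique i).subset (Finset.coe_subset.2 h))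
    have e3 : 𝒯.filter (fun e => S ⊆ c e.1 ∩ c e.2) = ∅ := by
      rw [Finset.filter_eq_empty_iff]
      intro e _ h
      exact hcl ((hclique e.1).subset (Finset.coe_subset.2 (h.trans Finset.inter_subset_left)))
    have e2 : univ.filter (fun j : Fin n => S ⊆ π j) = ∅ := by
      rw [Finset.filter_eq_empty_iff]
      intro j _ h
      exact hcl ((hpeo j).subset (Finset.coe_subset.2 h))
    have e4 : univ.filter (fun j : Fin n => S ⊆ insert j (π j)) = ∅ := by
      rw [Finset.filter_eq_empty_iff]
      intro j _ h
      have hKclique : G.IsClique ((insert j (π j) : Finset (Fin n)) : Set (Fin n)) := by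
        rw [Finset.coe_insert]
        exact (hpeo j).insert (fun b hb _ => ((hπmem j b).1 hb).1)
      exact hcl (hKclique.subset (Finset.coe_subset.2 h))
    rw [e1, e2, e3, e4]
    simp

set_option maxHeartbeats 1000000 in
/-- for a triangulated graph `G` (with, WLOG, the identity order as a
perfect elimination ordering, `π i` being the later neighbors of `i`), a family
`c : ι → Finset (Fin n)` enumerating the maximal cliques of `G`, and a junction tree on
the cliques (a tree `T` with edge list `𝒯` satisfying the running intersection
property), the junction-tree bound and the elimination-ordering bound coincide:
`∑_{C ∈ 𝒞} F(C ∩ A) − ∑_{(C,D) ∈ 𝒯} F(C ∩ D ∩ A)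
  = ∑_i [F(A ∩ (π_i ∪ {i})) − F(A ∩ π_i)]`. -/
theorem junction_tree_eq_elimination {n : ℕ} {ι : Type*} [Fintype ι] [DecidableEq ι]
    (G : SimpleGraph (Fin n)) [DecidableRel G.Adj]
    (F : Finset (Fin n) → ℝ)
    (hsub : ∀ A B : Finset (Fin n), F (A ∪ B) + F (A ∩ B) ≤ F A + F B)
    (hF0 : F ∅ = 0)
    -- perfect elimination ordering: `π i` = later neighbors of `i`, forming a clique
    (π : Fin n → Finset (Fin n))
    (hπ : ∀ i, π i = univ.filter (fun j => G.Adj i j ∧ i < j))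
    (hpeo : ∀ i, G.IsClique (π i : Set (Fin n)))
    -- `c` enumerates exactly the maximal cliques of `G`
    (c : ι → Finset (Fin n)) (hcinj : Function.Injective c)
    (hclique : ∀ i, G.IsClique (c i : Set (Fin n)))
    (hmax : ∀ i, ∀ D : Finset (Fin n), G.IsClique (D : Set (Fin n)) → c i ⊆ D → D = c i)
    (hall : ∀ D : Finset (Fin n), G.IsClique (D : Set (Fin n)) →
      (∀ D' : Finset (Fin n), G.IsClique (D' : Set (Fin n)) → D ⊆ D' → D' = D) →
      ∃ i, c i = D)
    -- junction tree: `𝒯` lists each tree edge once, `T` is a tree on the cliques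
    (𝒯 : Finset (ι × ι))
    (hirrefl : ∀ e ∈ 𝒯, e.1 ≠ e.2)
    (honce : ∀ e ∈ 𝒯, (e.2, e.1) ∉ 𝒯)
    (T : SimpleGraph ι)
    (hT : T = SimpleGraph.fromRel (fun i j => (i, j) ∈ 𝒯))
    (htree : T.IsTree)
    -- running intersection property: any clique-node separating `i` from `j` in the
    -- tree contains `c i ∩ c j`
    (hRIP : ∀ i j k : ι, (∀ p : T.Walk i j, k ∈ p.support) → c i ∩ c j ⊆ c k)
    (A : Finset (Fin n)) :
    (∑ i : ι, F (c i ∩ A)) - (∑ e ∈ 𝒯, F (c e.1 ∩ c e.2 ∩ A)) =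
      ∑ i : Fin n, (F (A ∩ insert i (π i)) - F (A ∩ π i)) := by
  have core := core_count G π hπ hpeo c hcinj hclique hmax hall 𝒯 hirrefl honce T hT htree hRIP
  set d : Finset (Fin n) → ℤ := fun S =>
    (((univ.filter fun i : ι => c i = S).card : ℤ)
        + ((univ.filter fun j : Fin n => π j = S).card : ℤ))
      - (((𝒯.filter fun e => c e.1 ∩ c e.2 = S).card : ℤ)
        + ((univ.filter fun j : Fin n => insert j (π j) = S).card : ℤ)) with hd_def
  have hU : ∀ S : Finset (Fin n), S.Nonempty → ∑ S' ∈ univ.filter (S ⊆ ·), d S' = 0 := by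
    intro S hSne
    have h1 := upcount (univ : Finset ι) c S
    have h2 := upcount (univ : Finset (Fin n)) π S
    have h3 := upcount 𝒯 (fun e => c e.1 ∩ c e.2) S
    have h4 := upcount (univ : Finset (Fin n)) (fun j => insert j (π j)) S
    have hcore := core S hSne
    calc ∑ S' ∈ univ.filter (S ⊆ ·), d S'
        = ((∑ S' ∈ univ.filter (S ⊆ ·), ((univ.filter fun i : ι => c i = S').card : ℤ))
            + ∑ S' ∈ univ.filter (S ⊆ ·), ((univ.filter fun j : Fin n => π j = S').card : ℤ))
          - ((∑ S' ∈ univ.filter (S ⊆ ·), ((𝒯.filter fun e => c e.1 ∩ c e.2 = S').card : ℤ))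
            + ∑ S' ∈ univ.filter (S ⊆ ·),
                ((univ.filter fun j : Fin n => insert j (π j) = S').card : ℤ)) := by
          rw [Finset.sum_sub_distrib, Finset.sum_add_distrib, Finset.sum_add_distrib]
      _ = 0 := by
          rw [← Nat.cast_sum, ← Nat.cast_sum, ← Nat.cast_sum, ← Nat.cast_sum,
            ← h1, ← h2, ← h3, ← h4]
          exact sub_eq_zero_of_eq (by exact_mod_cast hcore)
  have hdzero := exactzero d hU
  rw [Finset.sum_sub_distrib]
  simp only [Finset.inter_comm A]
  have e1 : (∑ i : ι, F (c i ∩ A))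
      = ∑ S : Finset (Fin n), ((univ.filter fun i : ι => c i = S).card : ℝ) * F (S ∩ A) :=
    sumfib univ c (fun S => F (S ∩ A))
  have e2 : (∑ j : Fin n, F (π j ∩ A))
      = ∑ S : Finset (Fin n), ((univ.filter fun j : Fin n => π j = S).card : ℝ) * F (S ∩ A) :=
    sumfib univ π (fun S => F (S ∩ A))
  have e3 : (∑ e ∈ 𝒯, F (c e.1 ∩ c e.2 ∩ A))
      = ∑ S : Finset (Fin n), ((𝒯.filter fun e => c e.1 ∩ c e.2 = S).card : ℝ) * F (S ∩ A) :=
    sumfib 𝒯 (fun e => c e.1 ∩ c e.2) (fun S => F (S ∩ A))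
  have e4 : (∑ j : Fin n, F (insert j (π j) ∩ A))
      = ∑ S : Finset (Fin n),
          ((univ.filter fun j : Fin n => insert j (π j) = S).card : ℝ) * F (S ∩ A) :=
    sumfib univ (fun j => insert j (π j)) (fun S => F (S ∩ A))
  have key : ∀ S : Finset (Fin n),
      ((univ.filter fun i : ι => c i = S).card : ℝ) * F (S ∩ A)
        + ((univ.filter fun j : Fin n => π j = S).card : ℝ) * F (S ∩ A)
      = ((𝒯.filter fun e => c e.1 ∩ c e.2 = S).card : ℝ) * F (S ∩ A)
        + ((univ.filter fun j : Fin n => insert j (π j) = S).card : ℝ) * F (S ∩ A) := by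
    intro S
    rcases eq_or_ne S ∅ with rfl | hne
    · rw [Finset.empty_inter, hF0]; ring
    · have hd : (((univ.filter fun i : ι => c i = S).card : ℤ)
            + ((univ.filter fun j : Fin n => π j = S).card : ℤ))
          - (((𝒯.filter fun e => c e.1 ∩ c e.2 = S).card : ℤ)
            + ((univ.filter fun j : Fin n => insert j (π j) = S).card : ℤ)) = 0 :=
        hdzero S (Finset.nonempty_iff_ne_empty.2 hne)
      have h := sub_eq_zero.1 hd
      rw [← add_mul, ← add_mul]
      congr 1
      exact_mod_cast h
  have hsum := Finset.sum_congr rfl (fun S (_ : S ∈ (univ : Finset (Finset (Fin n)))) => key S)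
  rw [Finset.sum_add_distrib, Finset.sum_add_distrib] at hsum
  linarith [e1, e2, e3, e4, hsum]
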